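/- arXiv:1203.0042 — 2 statements merged into one kernel-verified Lean document; each statement's English description precedes it below -/
import Mathlib

section
/- Let r > 0. Suppose (F_n)_{n≥1} is a sequence of functions holomorphic on the closed disc {w ∈ ℂ : |w| ≤ r} and F₀ is holomorphic on the punctured closed disc {w : 0 < |w| ≤ r}. Assume F_n(w) → F₀(w) as n → ∞ for every w with 0 < |w| ≤ r, and that the convergence is uniform on the circle {|w| = r/2}. Then F₀ extends to a function holomorphic at w = 0, i.e. to a holomorphic function on the whole disc {|w| ≤ r}. -/
open Complex Filter Metric

noncomputable section

/-- if `(F_n)` are holomorphic on (a neighbourhood of) the closed disc of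
radius `r`, `F₀` is holomorphic on (a neighbourhood of) the punctured closed disc,
`F_n → F₀` pointwise on the punctured disc and uniformly on the circle `|w| = r/2`,
then `F₀` extends holomorphically over `w = 0`. -/
theorem statement9 (r : ℝ) (hr : 0 < r) (F : ℕ → ℂ → ℂ) (F₀ : ℂ → ℂ)
    (hF : ∀ n : ℕ, 1 ≤ n → ∃ U : Set ℂ, IsOpen U ∧ closedBall (0 : ℂ) r ⊆ U ∧
      DifferentiableOn ℂ (F n) U)
    (hF₀ : ∃ U : Set ℂ, IsOpen U ∧ (closedBall (0 : ℂ) r \ {0}) ⊆ U ∧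
      DifferentiableOn ℂ F₀ U)
    (hptw : ∀ w : ℂ, 0 < ‖w‖ → ‖w‖ ≤ r →
      Tendsto (fun n => F n w) atTop (nhds (F₀ w)))
    (hunif : TendstoUniformlyOn (fun n w => F n w) F₀ atTop (sphere (0 : ℂ) (r / 2))) :
    ∃ (g : ℂ → ℂ) (U : Set ℂ), IsOpen U ∧ closedBall (0 : ℂ) r ⊆ U ∧
      DifferentiableOn ℂ g U ∧
      ∀ w : ℂ, 0 < ‖w‖ → ‖w‖ ≤ r → g w = F₀ w := by
  obtain ⟨U, hUo, hUs, hUd⟩ := hF₀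
  have hr2 : (0 : ℝ) < r / 2 := by linarith
  -- uniform Cauchy on the closed ball of radius r/2, via the maximum principle
  have hcauchy : UniformCauchySeqOn F atTop (closedBall (0 : ℂ) (r / 2)) := by
    rw [Metric.uniformCauchySeqOn_iff]
    intro ε hε
    obtain ⟨N, hN⟩ := (Metric.uniformCauchySeqOn_iff.mp hunif.uniformCauchySeqOn)
      (ε / 2) (by linarith)
    refine ⟨max N 1, fun m hm n hn x hx => ?_⟩
    have hm1 : 1 ≤ m := le_trans (le_max_right N 1) hm
    have hn1 : 1 ≤ n := le_trans (le_max_right N 1) hn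
    obtain ⟨Um, hUmo, hUms, hUmd⟩ := hF m hm1
    obtain ⟨Un, hUno, hUns, hUnd⟩ := hF n hn1
    have hsub : closedBall (0 : ℂ) (r / 2) ⊆ Um ∩ Un := by
      intro y hy
      have : y ∈ closedBall (0 : ℂ) r :=
        closedBall_subset_closedBall (by linarith) hy
      exact ⟨hUms this, hUns this⟩
    have hdiff : DifferentiableOn ℂ (fun y => F m y - F n y)
        (closedBall (0 : ℂ) (r / 2)) :=
      ((hUmd.mono (Set.inter_subset_left)).sub
        (hUnd.mono (Set.inter_subset_right))).mono hsub
    have key : ‖F m x - F n x‖ ≤ ε / 2 := by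
      have hb : Bornology.IsBounded (ball (0 : ℂ) (r / 2)) := isBounded_ball
      have hdc : DiffContOnCl ℂ (fun y => F m y - F n y) (ball (0 : ℂ) (r / 2)) := by
        apply DifferentiableOn.diffContOnCl
        rwa [closure_ball (0 : ℂ) (ne_of_gt hr2)]
      refine Complex.norm_le_of_forall_mem_frontier_norm_le hb hdc (fun z hz => ?_) ?_
      · rw [frontier_ball (0 : ℂ) (ne_of_gt hr2)] at hz
        have := hN m (le_trans (le_max_left N 1) hm) n (le_trans (le_max_left N 1) hn) z hz
        rw [dist_eq_norm] at this
        exact this.le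
      · rwa [closure_ball (0 : ℂ) (ne_of_gt hr2)]
    rw [dist_eq_norm]
    calc ‖F m x - F n x‖ ≤ ε / 2 := key
    _ < ε := by linarith
  have hcs : ∀ w ∈ closedBall (0 : ℂ) (r / 2), CauchySeq (fun n => F n w) :=
    fun w hw => hcauchy.cauchySeq hw
  set G : ℂ → ℂ := fun w => limUnder atTop (fun n => F n w) with hGdef
  have hG : ∀ w ∈ closedBall (0 : ℂ) (r / 2),
      Tendsto (fun n => F n w) atTop (nhds (G w)) :=
    fun w hw => (hcs w hw).tendsto_limUnder
  have hGF₀ : ∀ w ∈ closedBall (0 : ℂ) (r / 2), w ≠ 0 → G w = F₀ w := by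
    intro w hw hw0
    have h1 : 0 < ‖w‖ := by
      simpa [norm_pos_iff] using hw0
    have h2 : ‖w‖ ≤ r := by
      have := mem_closedBall_zero_iff.mp hw
      calc ‖w‖ ≤ r / 2 := this
      _ ≤ r := by linarith
    exact tendsto_nhds_unique (hG w hw) (hptw w h1 h2)
  have hGdiff : DifferentiableOn ℂ G (ball (0 : ℂ) (r / 2)) := by
    have htu : TendstoUniformlyOn F G atTop (closedBall (0 : ℂ) (r / 2)) :=
      hcauchy.tendstoUniformlyOn_of_tendsto hG
    have htlu : TendstoLocallyUniformlyOn F G atTop (ball (0 : ℂ) (r / 2)) :=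
      (htu.tendstoLocallyUniformlyOn).mono ball_subset_closedBall
    refine htlu.differentiableOn ?_ isOpen_ball
    filter_upwards [eventually_ge_atTop 1] with n hn
    obtain ⟨Un, hUno, hUns, hUnd⟩ := hF n hn
    exact hUnd.mono fun y hy => hUns (closedBall_subset_closedBall (by linarith)
      (ball_subset_closedBall hy))
  set g : ℂ → ℂ := fun w => if w = 0 then G 0 else F₀ w with hgdef
  have hgG : ∀ w ∈ ball (0 : ℂ) (r / 2), g w = G w := by
    intro w hw
    by_cases h : w = 0
    · simp [hgdef, h]
    · rw [hgdef]
      simp only [if_neg h]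
      exact (hGF₀ w (ball_subset_closedBall hw) h).symm
  refine ⟨g, (U \ {0}) ∪ ball (0 : ℂ) (r / 2),
    (hUo.sdiff isClosed_singleton).union isOpen_ball, ?_, ?_, ?_⟩
  · intro x hx
    by_cases h : x = 0
    · exact Or.inr (by simp [h, hr2])
    · exact Or.inl ⟨hUs ⟨hx, h⟩, h⟩
  · intro x hx
    rcases hx with hx | hx
    · have hF₀at : DifferentiableAt ℂ F₀ x := hUd.differentiableAt (hUo.mem_nhds hx.1)
      have heq : g =ᶠ[nhds x] F₀ := by
        have hne : ∀ᶠ y in nhds x, y ≠ 0 := by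
          have : x ∉ ({0} : Set ℂ) := hx.2
          exact (isOpen_compl_singleton.eventually_mem this).mono fun y hy => hy
        filter_upwards [hne] with y hy
        simp [hgdef, hy]
      exact (hF₀at.congr_of_eventuallyEq heq).differentiableWithinAt
    · have hGat : DifferentiableAt ℂ G x := hGdiff.differentiableAt (isOpen_ball.mem_nhds hx)
      have heq : g =ᶠ[nhds x] G := by
        filter_upwards [isOpen_ball.eventually_mem hx] with y hy
        exact hgG y hy
      exact (hGat.congr_of_eventuallyEq heq).differentiableWithinAt
  · intro w hw _
    have h : w ≠ 0 := by
      intro h; rw [h] at hw; simp at hw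
    simp [hgdef, h]
end
end

section
/- For all η, ν, a, b, c₁, c₂ ∈ ℂ and all z ∈ ℂ: θ(2z−2η)·F_η(a,b,c₁,c₂; z−ν, −z−ν−η) + θ(2z+2η)·F_η(a,b,c₁,c₂; −z−ν, z−ν−η) = 0. (Equivalently, the difference operator 𝒜_ν(F_η) vanishes identically for every ν ∈ ℂ.) -/
open Complex

noncomputable section

/-- The Jacobi theta function `θ₁(z|τ)`. -/
def θ (τ z : ℂ) : ℂ :=
  I * ∑' n : ℤ, (-1 : ℂ) ^ n * Complex.exp (Real.pi * I * τ * ((n : ℂ) - 1/2) ^ 2) *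
    Complex.exp (Real.pi * I * (2 * (n : ℂ) - 1) * z)

/-- `f(α,β,γ;z) = θ(z+α)θ(z+β)θ(z+γ)θ(z−α−β−γ)`. -/
def fV (τ α β γ z : ℂ) : ℂ :=
  θ τ (z + α) * θ τ (z + β) * θ τ (z + γ) * θ τ (z - α - β - γ)

/-- The generating relation functions `F_η(a,b,c₁,c₂;z₁,z₂)`. -/
def Fη (τ η a b c₁ c₂ z₁ z₂ : ℂ) : ℂ :=
  fV τ (a - η/2) (b - η/2) (c₁ + η/2) z₁ * fV τ (a + η/2) (b + η/2) (c₂ - η/2) z₂ -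
  fV τ (a - η/2) (b - η/2) (c₂ + η/2) z₁ * fV τ (a + η/2) (b + η/2) (c₁ - η/2) z₂

namespace S17

/-- index type for fourfold theta products -/
abbrev K := (ℤ × ℤ) × (ℤ × ℤ)

/-- Single-exponential form of the theta series term. -/
def G (τ w : ℂ) (n : ℤ) : ℂ :=
  Complex.exp (Real.pi * I * ((n : ℂ) + τ * ((n : ℂ) - 1/2) ^ 2 + (2 * (n : ℂ) - 1) * w))

lemma theta_eq (τ z : ℂ) : θ τ z = I * ∑' n : ℤ, G τ z n := by
  unfold θ
  congr 1
  refine tsum_congr fun n => ?_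
  have h1 : (-1 : ℂ) ^ n = Complex.exp (Real.pi * I * (n : ℂ)) := by
    rw [show ((Real.pi : ℂ) * I * (n : ℂ)) = (n : ℂ) * (Real.pi * I) by ring,
      Complex.exp_int_mul, Complex.exp_pi_mul_I]
  rw [h1, ← Complex.exp_add, ← Complex.exp_add, G]
  congr 1
  ring

lemma summable_G {τ : ℂ} (hτ : 0 < τ.im) (w : ℂ) : Summable (G τ w) := by
  have h : ∀ n : ℤ, G τ w n =
      Complex.exp (Real.pi * I * (τ/4 - w)) * jacobiTheta₂_term n (w + 1/2 - τ/2) τ := by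
    intro n
    rw [G, jacobiTheta₂_term, ← Complex.exp_add]
    congr 1
    ring
  exact Summable.congr (((summable_jacobiTheta₂_term_iff _ τ).mpr hτ).mul_left _) fun n => (h n).symm

lemma summable_G_norm {τ : ℂ} (hτ : 0 < τ.im) (w : ℂ) :
    Summable fun n : ℤ => ‖G τ w n‖ := summable_norm_iff.mpr (summable_G hτ w)

/-- The theta function is odd. -/
lemma theta_neg (τ w : ℂ) : θ τ (-w) = -θ τ w := by
  rw [theta_eq, theta_eq]
  have key : ∀ n : ℤ, G τ (-w) n = -G τ w ((Equiv.subLeft (1:ℤ)) n) := by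
    intro n
    have hneg : ∀ x : ℂ, -Complex.exp x = Complex.exp (x + Real.pi * I) := by
      intro x; rw [Complex.exp_add, Complex.exp_pi_mul_I]; ring
    simp only [G, Equiv.subLeft_apply, hneg]
    rw [Complex.exp_eq_exp_iff_exists_int]
    exact ⟨n - 1, by push_cast; ring⟩
  calc I * ∑' n : ℤ, G τ (-w) n
      = I * ∑' n : ℤ, -G τ w ((Equiv.subLeft (1:ℤ)) n) := by rw [tsum_congr key]
    _ = I * -∑' n : ℤ, G τ w ((Equiv.subLeft (1:ℤ)) n) := by rw [tsum_neg]
    _ = -(I * ∑' n : ℤ, G τ w n) := by rw [(Equiv.subLeft (1:ℤ)).tsum_eq (G τ w)]; ring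

/-- fourfold product term -/
def Hf (τ w₁ w₂ w₃ w₄ : ℂ) (n : K) : ℂ :=
  G τ w₁ n.1.1 * G τ w₂ n.1.2 * G τ w₃ n.2.1 * G τ w₄ n.2.2

lemma summable_H {τ : ℂ} (hτ : 0 < τ.im) (w₁ w₂ w₃ w₄ : ℂ) :
    Summable (Hf τ w₁ w₂ w₃ w₄) := by
  have h12 := (summable_G_norm hτ w₁).mul_norm (summable_G_norm hτ w₂)
  have h34 := (summable_G_norm hτ w₃).mul_norm (summable_G_norm hτ w₄)
  exact (summable_mul_of_summable_norm h12 h34).congr fun n => by simp only [Hf]; ring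

lemma prod4 {τ : ℂ} (hτ : 0 < τ.im) (w₁ w₂ w₃ w₄ : ℂ) :
    θ τ w₁ * θ τ w₂ * θ τ w₃ * θ τ w₄ = ∑' n : K, Hf τ w₁ w₂ w₃ w₄ n := by
  rw [theta_eq, theta_eq, theta_eq, theta_eq]
  have hI : ∀ a b c d : ℂ, (I*a) * (I*b) * (I*c) * (I*d) = (a*b) * (c*d) := by
    intro a b c d
    have h : I * I * (I * I) = 1 := by rw [Complex.I_mul_I]; norm_num
    linear_combination (a*b*c*d) * h
  rw [hI]
  rw [tsum_mul_tsum_of_summable_norm (summable_G_norm hτ w₁) (summable_G_norm hτ w₂),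
      tsum_mul_tsum_of_summable_norm (summable_G_norm hτ w₃) (summable_G_norm hτ w₄),
      tsum_mul_tsum_of_summable_norm ((summable_G_norm hτ w₁).mul_norm (summable_G_norm hτ w₂))
        ((summable_G_norm hτ w₃).mul_norm (summable_G_norm hτ w₄))]
  exact tsum_congr fun n => by simp only [Hf]; ring

/-- parity-even parameterization -/
def pe (n : K) : K := ((n.1.1, n.1.2), (n.2.1, n.1.1 + n.1.2 + n.2.1 + 2 * n.2.2))
/-- parity-odd parameterization -/
def po (n : K) : K := ((n.1.1, n.1.2), (n.2.1, n.1.1 + n.1.2 + n.2.1 + 2 * n.2.2 + 1))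

def Sset : Set K := {n | Even (n.1.1 + n.1.2 + n.2.1 + n.2.2)}

def epe : K ≃ Sset where
  toFun x := ⟨pe x, ⟨x.1.1 + x.1.2 + x.2.1 + x.2.2, by simp [pe, Sset]; ring⟩⟩
  invFun y := ((y.1.1.1, y.1.1.2), (y.1.2.1, (y.1.2.2 - y.1.1.1 - y.1.1.2 - y.1.2.1) / 2))
  left_inv x := by
    obtain ⟨⟨a, b⟩, c, d⟩ := x
    simp only [pe]
    refine Prod.ext rfl (Prod.ext rfl ?_)
    simp; omega
  right_inv y := by
    obtain ⟨⟨⟨a, b⟩, c, d⟩, h⟩ := y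
    simp only [Sset, Set.mem_setOf_eq, Int.even_iff] at h
    apply Subtype.ext
    simp only [pe]
    refine Prod.ext rfl (Prod.ext rfl ?_)
    simp; omega

def epo : K ≃ ↥(Ssetᶜ) where
  toFun x := ⟨po x, by
    simp only [po, Set.mem_compl_iff, Sset, Set.mem_setOf_eq, Int.even_iff]
    omega⟩
  invFun y := ((y.1.1.1, y.1.1.2), (y.1.2.1, (y.1.2.2 - y.1.1.1 - y.1.1.2 - y.1.2.1 - 1) / 2))
  left_inv x := by
    obtain ⟨⟨a, b⟩, c, d⟩ := x
    simp only [po]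
    refine Prod.ext rfl (Prod.ext rfl ?_)
    simp; omega
  right_inv y := by
    obtain ⟨⟨⟨a, b⟩, c, d⟩, h⟩ := y
    simp only [Set.mem_compl_iff, Sset, Set.mem_setOf_eq, Int.even_iff] at h
    apply Subtype.ext
    simp only [po]
    refine Prod.ext rfl (Prod.ext rfl ?_)
    simp; omega

lemma split (f : K → ℂ) (hf : Summable f) :
    ∑' n, f n = (∑' x : K, f (pe x)) + (∑' x : K, f (po x)) := by
  rw [← Summable.tsum_add_tsum_compl (s := Sset) (hf.subtype _) (hf.subtype _)]
  congr 1
  · exact (epe.tsum_eq fun y : Sset => f y).symm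
  · exact (epo.tsum_eq fun y : ↥(Ssetᶜ) => f y).symm

def e1 : K ≃ K where
  toFun x := ((-x.2.2, x.1.1 + x.1.2 + x.2.2), (x.1.1 + x.2.1 + x.2.2, -x.1.1))
  invFun x := ((-x.2.2, x.1.1 + x.1.2 + x.2.2), (x.1.1 + x.2.1 + x.2.2, -x.1.1))
  left_inv x := by
    obtain ⟨⟨a, b⟩, c, d⟩ := x
    refine Prod.ext (Prod.ext ?_ ?_) (Prod.ext ?_ ?_) <;> simp <;> ring
  right_inv x := by
    obtain ⟨⟨a, b⟩, c, d⟩ := x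
    refine Prod.ext (Prod.ext ?_ ?_) (Prod.ext ?_ ?_) <;> simp <;> ring

def e2 : K ≃ K where
  toFun x := ((x.1.1 + x.1.2 + x.2.1 + x.2.2, -x.2.1 - x.2.2), (-x.1.2 - x.2.2, x.2.2))
  invFun x := ((x.1.1 + x.1.2 + x.2.1 + x.2.2, -x.2.1 - x.2.2), (-x.1.2 - x.2.2, x.2.2))
  left_inv x := by
    obtain ⟨⟨a, b⟩, c, d⟩ := x
    refine Prod.ext (Prod.ext ?_ ?_) (Prod.ext ?_ ?_) <;> simp <;> ring
  right_inv x := by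
    obtain ⟨⟨a, b⟩, c, d⟩ := x
    refine Prod.ext (Prod.ext ?_ ?_) (Prod.ext ?_ ?_) <;> simp <;> ring

def e3 : K ≃ K where
  toFun x := ((x.1.1 + x.1.2 + x.2.1 + x.2.2, -x.2.1 - x.2.2), (-x.1.2 - x.2.2, -x.1.1))
  invFun x := ((-x.2.2, x.1.1 + x.1.2 + x.2.2),
    (x.1.1 + x.2.1 + x.2.2, -x.1.1 - x.1.2 - x.2.1 - x.2.2))
  left_inv x := by
    obtain ⟨⟨a, b⟩, c, d⟩ := x
    refine Prod.ext (Prod.ext ?_ ?_) (Prod.ext ?_ ?_) <;> simp <;> ring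
  right_inv x := by
    obtain ⟨⟨a, b⟩, c, d⟩ := x
    refine Prod.ext (Prod.ext ?_ ?_) (Prod.ext ?_ ?_) <;> simp <;> ring

variable (τ x y u v : ℂ)

lemma tw1 (n : K) :
    Hf τ (x+y) (x-y) (u+v) (u-v) (pe n) = Hf τ (x+v) (x-v) (u+y) (u-y) (pe (e1 n)) := by
  obtain ⟨⟨a, b⟩, c, d⟩ := n
  simp only [Hf, G, pe, e1, Equiv.coe_fn_mk, ← Complex.exp_add]
  rw [Complex.exp_eq_exp_iff_exists_int]
  exact ⟨0, by push_cast; ring⟩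

lemma tw2 (n : K) :
    Hf τ (x+y) (x-y) (u+v) (u-v) (po n) = Hf τ (x+u) (x-u) (y+v) (y-v) (po (e2 n)) := by
  obtain ⟨⟨a, b⟩, c, d⟩ := n
  simp only [Hf, G, po, e2, Equiv.coe_fn_mk, ← Complex.exp_add]
  rw [Complex.exp_eq_exp_iff_exists_int]
  exact ⟨b + c + d, by push_cast; ring⟩

lemma tw3 (n : K) :
    Hf τ (x+v) (x-v) (u+y) (u-y) (po n) = -Hf τ (x+u) (x-u) (y+v) (y-v) (pe (e3 n)) := by
  obtain ⟨⟨a, b⟩, c, d⟩ := n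
  have hneg : ∀ w : ℂ, -Complex.exp w = Complex.exp (w + Real.pi * I) := by
    intro w; rw [Complex.exp_add, Complex.exp_pi_mul_I]; ring
  simp only [Hf, G, pe, po, e3, Equiv.coe_fn_mk, ← Complex.exp_add, hneg]
  rw [Complex.exp_eq_exp_iff_exists_int]
  exact ⟨a + b + c + 2*d, by push_cast; ring⟩

/-- Weierstrass three-term theta identity. -/
lemma weier {τ : ℂ} (hτ : 0 < τ.im) (x y u v : ℂ) :
    θ τ (x+y) * θ τ (x-y) * θ τ (u+v) * θ τ (u-v)
      - θ τ (x+v) * θ τ (x-v) * θ τ (u+y) * θ τ (u-y)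
    = θ τ (x+u) * θ τ (x-u) * θ τ (y+v) * θ τ (y-v) := by
  rw [prod4 hτ, prod4 hτ, prod4 hτ,
    split _ (summable_H hτ (x+y) (x-y) (u+v) (u-v)),
    split _ (summable_H hτ (x+v) (x-v) (u+y) (u-y)),
    split _ (summable_H hτ (x+u) (x-u) (y+v) (y-v))]
  have h1 : (∑' n : K, Hf τ (x+y) (x-y) (u+v) (u-v) (pe n))
      = ∑' n : K, Hf τ (x+v) (x-v) (u+y) (u-y) (pe n) := by
    rw [← e1.tsum_eq fun n => Hf τ (x+v) (x-v) (u+y) (u-y) (pe n)]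
    exact tsum_congr fun n => tw1 τ x y u v n
  have h2 : (∑' n : K, Hf τ (x+y) (x-y) (u+v) (u-v) (po n))
      = ∑' n : K, Hf τ (x+u) (x-u) (y+v) (y-v) (po n) := by
    rw [← e2.tsum_eq fun n => Hf τ (x+u) (x-u) (y+v) (y-v) (po n)]
    exact tsum_congr fun n => tw2 τ x y u v n
  have h3 : (∑' n : K, Hf τ (x+v) (x-v) (u+y) (u-y) (po n))
      = -∑' n : K, Hf τ (x+u) (x-u) (y+v) (y-v) (pe n) := by
    rw [← e3.tsum_eq fun n => Hf τ (x+u) (x-u) (y+v) (y-v) (pe n), ← tsum_neg]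
    exact tsum_congr fun n => tw3 τ x y u v n
  linear_combination h1 + h2 - h3

/-- The key bracket identity for `Fη`. -/
lemma key {τ : ℂ} (hτ : 0 < τ.im) (η a b c₁ c₂ z₁ z₂ : ℂ) :
    θ τ (z₁ + c₁ + η/2) * θ τ (z₁ - a - b - c₁ + η/2)
      * θ τ (z₂ + c₂ - η/2) * θ τ (z₂ - a - b - c₂ - η/2)
    - θ τ (z₁ + c₂ + η/2) * θ τ (z₁ - a - b - c₂ + η/2)
      * θ τ (z₂ + c₁ - η/2) * θ τ (z₂ - a - b - c₁ - η/2)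
    = θ τ (z₁ + z₂ - a - b) * θ τ (z₁ - z₂ + η) * θ τ (c₁ + c₂ + a + b) * θ τ (c₁ - c₂) := by
  have W := weier hτ (z₁ - (a+b)/2 + η/2) (c₁ + (a+b)/2) (z₂ - (a+b)/2 - η/2) (c₂ + (a+b)/2)
  ring_nf at W ⊢
  linear_combination W

/-- Factorization of `Fη` using the three-term identity. -/
lemma Fη_eq {τ : ℂ} (hτ : 0 < τ.im) (η a b c₁ c₂ z₁ z₂ : ℂ) :
    Fη τ η a b c₁ c₂ z₁ z₂ =
      θ τ (z₁ + (a - η/2)) * θ τ (z₁ + (b - η/2)) * θ τ (z₂ + (a + η/2)) * θ τ (z₂ + (b + η/2))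
      * (θ τ (z₁ + z₂ - a - b) * θ τ (z₁ - z₂ + η)
        * θ τ (c₁ + c₂ + a + b) * θ τ (c₁ - c₂)) := by
  have hk := key hτ η a b c₁ c₂ z₁ z₂
  unfold Fη fV
  linear_combination (norm := ring_nf) (θ τ (z₁ + (a - η/2)) * θ τ (z₁ + (b - η/2))
    * θ τ (z₂ + (a + η/2)) * θ τ (z₂ + (b + η/2))) * hk

end S17

/-- Lemma B.2: for all `η, ν, a, b, c₁, c₂, z ∈ ℂ`,
`θ(2z−2η)·F_η(a,b,c₁,c₂;z−ν,−z−ν−η) + θ(2z+2η)·F_η(a,b,c₁,c₂;−z−ν,z−ν−η) = 0`;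
equivalently, the difference operator `𝒜_ν(F_η)` vanishes identically. -/
theorem statement17 (τ : ℂ) (hτ : 0 < τ.im) (η ν a b c₁ c₂ z : ℂ) :
    θ τ (2 * z - 2 * η) * Fη τ η a b c₁ c₂ (z - ν) (-z - ν - η) +
      θ τ (2 * z + 2 * η) * Fη τ η a b c₁ c₂ (-z - ν) (z - ν - η) = 0 := by
  rw [S17.Fη_eq hτ η a b c₁ c₂ (z - ν) (-z - ν - η),
      S17.Fη_eq hτ η a b c₁ c₂ (-z - ν) (z - ν - η)]
  have hodd := S17.theta_neg τ (2 * z - 2 * η)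
  linear_combination (norm := ring_nf) (θ τ (2*z + 2*η)
    * (θ τ ((z - ν) + (a - η/2)) * θ τ ((z - ν) + (b - η/2))
      * θ τ ((-z - ν - η) + (a + η/2)) * θ τ ((-z - ν - η) + (b + η/2)))
    * θ τ ((z - ν) + (-z - ν - η) - a - b)
    * (θ τ (c₁ + c₂ + a + b) * θ τ (c₁ - c₂))) * hodd
end
end
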